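/- arXiv:2101.09155 — 3 statements merged into one kernel-verified Lean document; each statement's English description precedes it below -/
import Mathlib

section
/- Let p and r be the Zipf–Mandelbrot distributions with parameters (N, q₁, s₁) and (N, q₂, s₂) respectively, let m = min_{1≤i≤N} p_i/r_i and M = max_{1≤i≤N} p_i/r_i, and assume m < M. Let f : ℝ → ℝ be three times continuously differentiable on an open interval containing [m,M] with f''' ≥ 0 there (f is 3-convex). Then, writing Δ = (f(M) − f(m))/(M − m): (1 − m)·[Δ − f'(m)/2] − (1/2)·∑_{i=1}^N (p_i − m·r_i)·f'(p_i/r_i) ≤ (M − 1)/(M − m)·f(m) + (1 − m)/(M − m)·f(M) − ∑_{i=1}^N r_i·f(p_i/r_i) ≤ (1/2)·∑_{i=1}^N (M·r_i − p_i)·f'(p_i/r_i) − (M − 1)·[Δ − f'(M)/2]. -/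
open Set in
lemma trapezoid_aux {f : ℝ → ℝ} {a b : ℝ}
    (hf : ContDiffOn ℝ 3 f (Set.Ioo a b))
    (hf3 : ∀ x ∈ Set.Ioo a b, 0 ≤ iteratedDeriv 3 f x)
    {u v : ℝ} (hu : u ∈ Set.Ioo a b) (hv : v ∈ Set.Ioo a b) (huv : u ≤ v) :
    f v - f u ≤ (v - u) * (deriv f u + deriv f v) / 2 := by
  have hopen : IsOpen (Set.Ioo a b) := isOpen_Ioo
  have hf1 : ContDiffOn ℝ 2 (deriv f) (Set.Ioo a b) := by
    have := hf.deriv_of_isOpen hopen (m := 2) (by norm_num)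
    exact this
  have hf2 : ContDiffOn ℝ 1 (deriv (deriv f)) (Set.Ioo a b) := by
    have := hf1.deriv_of_isOpen hopen (m := 1) (by norm_num)
    exact this
  have hd0 : ∀ x ∈ Set.Ioo a b, HasDerivAt f (deriv f x) x := fun x hx =>
    ((hf.differentiableOn (by norm_num)).differentiableAt (hopen.mem_nhds hx)).hasDerivAt
  have hd1 : ∀ x ∈ Set.Ioo a b, HasDerivAt (deriv f) (deriv (deriv f) x) x := fun x hx =>
    ((hf1.differentiableOn (by norm_num)).differentiableAt (hopen.mem_nhds hx)).hasDerivAt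
  have hiter : iteratedDeriv 3 f = deriv (deriv (deriv f)) := by
    rw [show (3:ℕ) = 2 + 1 from rfl, iteratedDeriv_succ,
      show (2:ℕ) = 1 + 1 from rfl, iteratedDeriv_succ, iteratedDeriv_one]
  have hmono : MonotoneOn (deriv (deriv f)) (Set.Ioo a b) := by
    apply monotoneOn_of_deriv_nonneg (convex_Ioo a b) hf2.continuousOn
    · rw [interior_Ioo]
      exact hf2.differentiableOn (by norm_num)
    · intro x hx
      rw [interior_Ioo] at hx
      have := hf3 x hx
      rwa [hiter] at this
  have hsub : Set.Icc u v ⊆ Set.Ioo a b := Set.Icc_subset_Ioo hu.1 hv.2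
  have key : ∀ t ∈ Set.Icc u v, deriv f t - deriv f u ≤ (t - u) * deriv (deriv f) t := by
    intro t ht
    rcases eq_or_lt_of_le ht.1 with h | h
    · simp [← h]
    · have hIcc : Set.Icc u t ⊆ Set.Ioo a b := Set.Icc_subset_Ioo hu.1
        (lt_of_le_of_lt ht.2 hv.2)
      obtain ⟨ξ, hξ, hslope⟩ := exists_deriv_eq_slope (deriv f) h
        (hf1.continuousOn.mono hIcc)
        (fun x hx => (hd1 x (hIcc ⟨le_of_lt hx.1, le_of_lt hx.2⟩)).differentiableAt.differentiableWithinAt)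
      have hξab : ξ ∈ Set.Ioo a b := hIcc ⟨le_of_lt hξ.1, le_of_lt hξ.2⟩
      have htab : t ∈ Set.Ioo a b := hsub ht
      have hle : deriv (deriv f) ξ ≤ deriv (deriv f) t := hmono hξab htab (le_of_lt hξ.2)
      have htu : (0:ℝ) < t - u := by linarith
      have : deriv f t - deriv f u = (t - u) * deriv (deriv f) ξ := by
        rw [hslope]; field_simp
      rw [this]
      exact mul_le_mul_of_nonneg_left hle htu.le
  set g := fun t => 2 * (f t - f u) - (t - u) * (deriv f u + deriv f t) with hg
  have hder : ∀ t ∈ Set.Ioo a b,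
      HasDerivAt g (deriv f t - deriv f u - (t - u) * deriv (deriv f) t) t := by
    intro t ht
    have h1 := ((hd0 t ht).sub_const (f u)).const_mul (2:ℝ)
    have h2 := ((hasDerivAt_id t).sub_const u).mul
      ((hasDerivAt_const t (deriv f u)).add (hd1 t ht))
    have h3 := h1.sub h2
    refine h3.congr_deriv ?_
    simp only [id_eq, Pi.add_apply]
    ring
  have hanti : AntitoneOn g (Set.Icc u v) := by
    apply antitoneOn_of_deriv_nonpos (convex_Icc u v)
    · intro t ht
      exact ((hder t (hsub ht)).continuousAt).continuousWithinAt
    · rw [interior_Icc]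
      intro t ht
      exact (hder t (hsub (Set.Ioo_subset_Icc_self ht))).differentiableAt.differentiableWithinAt
    · intro t ht
      rw [interior_Icc] at ht
      have htIcc : t ∈ Set.Icc u v := Set.Ioo_subset_Icc_self ht
      rw [(hder t (hsub htIcc)).deriv]
      linarith [key t htIcc]
  have h0 : g v ≤ g u := hanti ⟨le_refl u, huv⟩ ⟨huv, le_refl v⟩ huv
  have hgu : g u = 0 := by simp [hg]
  rw [hgu] at h0
  simp only [hg] at h0
  linarith

lemma zm_aux (N : ℕ) (hN : 1 ≤ N) (q s : ℝ) (hq : 0 ≤ q) :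
    (∀ i : Fin N, 0 < 1 / ((((i : ℕ) : ℝ) + 1 + q) ^ s
        * ∑ j : Fin N, 1 / ((((j : ℕ) : ℝ) + 1 + q) ^ s))) ∧
    ∑ i : Fin N, 1 / ((((i : ℕ) : ℝ) + 1 + q) ^ s
        * ∑ j : Fin N, 1 / ((((j : ℕ) : ℝ) + 1 + q) ^ s)) = 1 := by
  have hbase : ∀ i : Fin N, (0:ℝ) < ((i : ℕ) : ℝ) + 1 + q := by
    intro i; positivity
  have ht : ∀ i : Fin N, (0:ℝ) < (((i : ℕ) : ℝ) + 1 + q) ^ s := fun i =>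
    Real.rpow_pos_of_pos (hbase i) s
  have hne : Nonempty (Fin N) := Fin.pos_iff_nonempty.mp hN
  have hH : 0 < ∑ j : Fin N, 1 / ((((j : ℕ) : ℝ) + 1 + q) ^ s) :=
    Finset.sum_pos (fun j _ => by positivity) Finset.univ_nonempty
  refine ⟨fun i => by positivity, ?_⟩
  set H := ∑ j : Fin N, 1 / ((((j : ℕ) : ℝ) + 1 + q) ^ s) with hHdef
  have : ∑ i : Fin N, 1 / ((((i : ℕ) : ℝ) + 1 + q) ^ s * H)
      = (1 / H) * ∑ i : Fin N, 1 / ((((i : ℕ) : ℝ) + 1 + q) ^ s) := by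
    rw [Finset.mul_sum]
    refine Finset.sum_congr rfl fun i _ => ?_
    rw [← one_div_mul_one_div]
    ring
  rw [this, ← hHdef]
  field_simp


/-- Edmundson–Lah–Ribarič type inequality for the generalized f-divergence of two
Zipf–Mandelbrot laws (Corollary 4.1 of the paper). -/
theorem elr_zipf_mandelbrot_tm2 (N : ℕ) (hN : 1 ≤ N)
    (q₁ q₂ s₁ s₂ : ℝ) (hq₁ : 0 ≤ q₁) (hq₂ : 0 ≤ q₂) (hs₁ : 0 < s₁) (hs₂ : 0 < s₂)
    (p r : Fin N → ℝ)
    (hp : ∀ i : Fin N, p i =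
      1 / ((((i : ℕ) : ℝ) + 1 + q₁) ^ s₁
        * ∑ j : Fin N, 1 / ((((j : ℕ) : ℝ) + 1 + q₁) ^ s₁)))
    (hr : ∀ i : Fin N, r i =
      1 / ((((i : ℕ) : ℝ) + 1 + q₂) ^ s₂
        * ∑ j : Fin N, 1 / ((((j : ℕ) : ℝ) + 1 + q₂) ^ s₂)))
    (m M : ℝ)
    (hm : IsLeast (Set.range fun i : Fin N => p i / r i) m)
    (hM : IsGreatest (Set.range fun i : Fin N => p i / r i) M)
    (hmM : m < M)
    (f : ℝ → ℝ) (a b : ℝ) (ham : a < m) (hMb : M < b)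
    (hf : ContDiffOn ℝ 3 f (Set.Ioo a b))
    (hf3 : ∀ x ∈ Set.Ioo a b, 0 ≤ iteratedDeriv 3 f x) :
    let Δ := (f M - f m) / (M - m)
    (1 - m) * (Δ - deriv f m / 2)
          - (1 / 2) * ∑ i, (p i - m * r i) * deriv f (p i / r i)
        ≤ (M - 1) / (M - m) * f m + (1 - m) / (M - m) * f M
            - ∑ i, r i * f (p i / r i)
      ∧ (M - 1) / (M - m) * f m + (1 - m) / (M - m) * f M
            - ∑ i, r i * f (p i / r i)
        ≤ (1 / 2) * ∑ i, (M * r i - p i) * deriv f (p i / r i)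
            - (M - 1) * (Δ - deriv f M / 2) := by
  intro Δ
  have hΔdef : Δ = (f M - f m) / (M - m) := rfl
  obtain ⟨hp_pos', hp_sum'⟩ := zm_aux N hN q₁ s₁ hq₁
  obtain ⟨hr_pos', hr_sum'⟩ := zm_aux N hN q₂ s₂ hq₂
  have hppos : ∀ i, 0 < p i := fun i => (hp i) ▸ hp_pos' i
  have hrpos : ∀ i, 0 < r i := fun i => (hr i) ▸ hr_pos' i
  have hpsum : ∑ i, p i = 1 := by
    rw [Finset.sum_congr rfl fun i _ => hp i]; exact hp_sum'
  have hrsum : ∑ i, r i = 1 := by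
    rw [Finset.sum_congr rfl fun i _ => hr i]; exact hr_sum'
  have hMm : M - m ≠ 0 := sub_ne_zero.mpr hmM.ne'
  have hmle : ∀ i : Fin N, m ≤ p i / r i := fun i => hm.2 ⟨i, rfl⟩
  have hleM : ∀ i : Fin N, p i / r i ≤ M := fun i => hM.2 ⟨i, rfl⟩
  have hmIoo : m ∈ Set.Ioo a b := ⟨ham, lt_trans hmM hMb⟩
  have hMIoo : M ∈ Set.Ioo a b := ⟨lt_trans ham hmM, hMb⟩
  have hxIoo : ∀ i : Fin N, p i / r i ∈ Set.Ioo a b := fun i =>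
    ⟨lt_of_lt_of_le ham (hmle i), lt_of_le_of_lt (hleM i) hMb⟩
  have hrx : ∀ i : Fin N, r i * (p i / r i) = p i := fun i =>
    mul_div_cancel₀ (p i) (hrpos i).ne'
  have hΔ : Δ * (M - m) = f M - f m := by
    rw [hΔdef]; field_simp
  -- pointwise trapezoid inequalities
  have T1 : ∀ i : Fin N, f (p i / r i) - f m
      ≤ (p i / r i - m) * (deriv f m + deriv f (p i / r i)) / 2 := fun i =>
    trapezoid_aux hf hf3 hmIoo (hxIoo i) (hmle i)
  have T2 : ∀ i : Fin N, f M - f (p i / r i)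
      ≤ (M - p i / r i) * (deriv f (p i / r i) + deriv f M) / 2 := fun i =>
    trapezoid_aux hf hf3 (hxIoo i) hMIoo (hleM i)
  -- summation identities
  have hsumPmR : ∑ i, (p i - m * r i) = 1 - m := by
    rw [Finset.sum_sub_distrib, ← Finset.mul_sum, hpsum, hrsum, mul_one]
  have hsumMRp : ∑ i, (M * r i - p i) = M - 1 := by
    rw [Finset.sum_sub_distrib, ← Finset.mul_sum, hpsum, hrsum, mul_one]
  have E1 : ∑ i, r i * ((p i / r i - m) * (Δ - deriv f m / 2)
        - (1 / 2) * ((p i / r i - m) * deriv f (p i / r i)))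
      = (1 - m) * (Δ - deriv f m / 2)
        - (1 / 2) * ∑ i, (p i - m * r i) * deriv f (p i / r i) := by
    have step : ∀ i : Fin N, r i * ((p i / r i - m) * (Δ - deriv f m / 2)
          - (1 / 2) * ((p i / r i - m) * deriv f (p i / r i)))
        = (p i - m * r i) * (Δ - deriv f m / 2)
          - (1 / 2) * ((p i - m * r i) * deriv f (p i / r i)) := by
      intro i
      have h1 : r i * (p i / r i - m) = p i - m * r i := by
        rw [mul_sub, hrx i]; ring
      linear_combination (Δ - deriv f m / 2 - deriv f (p i / r i) / 2) * h1
    rw [Finset.sum_congr rfl fun i _ => step i, Finset.sum_sub_distrib,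
      ← Finset.sum_mul, hsumPmR, ← Finset.mul_sum]
  have E2 : ∑ i, r i * (f m + (p i / r i - m) * Δ - f (p i / r i))
      = (M - 1) / (M - m) * f m + (1 - m) / (M - m) * f M
        - ∑ i, r i * f (p i / r i) := by
    have step : ∀ i : Fin N, r i * (f m + (p i / r i - m) * Δ - f (p i / r i))
        = r i * f m + (p i - m * r i) * Δ - r i * f (p i / r i) := by
      intro i
      have h1 : r i * (p i / r i - m) = p i - m * r i := by
        rw [mul_sub, hrx i]; ring
      linear_combination Δ * h1
    rw [Finset.sum_congr rfl fun i _ => step i, Finset.sum_sub_distrib,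
      Finset.sum_add_distrib, ← Finset.sum_mul, hrsum, ← Finset.sum_mul, hsumPmR]
    have : (1:ℝ) * f m + (1 - m) * Δ
        = (M - 1) / (M - m) * f m + (1 - m) / (M - m) * f M := by
      rw [hΔdef]; field_simp; ring
    rw [this]
  have E3 : ∑ i, r i * ((1 / 2) * ((M - p i / r i) * deriv f (p i / r i))
        - (M - p i / r i) * (Δ - deriv f M / 2))
      = (1 / 2) * ∑ i, (M * r i - p i) * deriv f (p i / r i)
        - (M - 1) * (Δ - deriv f M / 2) := by
    have step : ∀ i : Fin N, r i * ((1 / 2) * ((M - p i / r i) * deriv f (p i / r i))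
          - (M - p i / r i) * (Δ - deriv f M / 2))
        = (1 / 2) * ((M * r i - p i) * deriv f (p i / r i))
          - (M * r i - p i) * (Δ - deriv f M / 2) := by
      intro i
      have h1 : r i * (M - p i / r i) = M * r i - p i := by
        rw [mul_sub, hrx i]; ring
      linear_combination (deriv f (p i / r i) / 2 - (Δ - deriv f M / 2)) * h1
    rw [Finset.sum_congr rfl fun i _ => step i, Finset.sum_sub_distrib,
      ← Finset.mul_sum, ← Finset.sum_mul, hsumMRp]
  constructor
  · calc (1 - m) * (Δ - deriv f m / 2)
          - (1 / 2) * ∑ i, (p i - m * r i) * deriv f (p i / r i)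
        = ∑ i, r i * ((p i / r i - m) * (Δ - deriv f m / 2)
            - (1 / 2) * ((p i / r i - m) * deriv f (p i / r i))) := E1.symm
      _ ≤ ∑ i, r i * (f m + (p i / r i - m) * Δ - f (p i / r i)) := by
          refine Finset.sum_le_sum fun i _ => ?_
          refine mul_le_mul_of_nonneg_left ?_ (hrpos i).le
          linarith [T1 i]
      _ = _ := E2
  · calc (M - 1) / (M - m) * f m + (1 - m) / (M - m) * f M
          - ∑ i, r i * f (p i / r i)
        = ∑ i, r i * (f m + (p i / r i - m) * Δ - f (p i / r i)) := E2.symm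
      _ ≤ ∑ i, r i * ((1 / 2) * ((M - p i / r i) * deriv f (p i / r i))
            - (M - p i / r i) * (Δ - deriv f M / 2)) := by
          refine Finset.sum_le_sum fun i _ => ?_
          refine mul_le_mul_of_nonneg_left ?_ (hrpos i).le
          linarith [T2 i, hΔ]
      _ = _ := E3
end

section
/- Let p and r be the Zipf–Mandelbrot distributions with parameters (N, q₁, s₁) and (N, q₂, s₂) respectively, let m = min_{1≤i≤N} p_i/r_i and M = max_{1≤i≤N} p_i/r_i, and assume m < M. Let f : ℝ → ℝ be three times continuously differentiable on an open interval containing [m,M] with f''' ≥ 0 there (f is 3-convex). Then, writing Δ = (f(M) − f(m))/(M − m): (M − 1)·[f'(M) − Δ] − (f''(M)/2)·∑_{i=1}^N (M·r_i − p_i)²/r_i ≤ (M − 1)/(M − m)·f(m) + (1 − m)/(M − m)·f(M) − ∑_{i=1}^N r_i·f(p_i/r_i) ≤ (1 − m)·[Δ − f'(m)] − (f''(m)/2)·∑_{i=1}^N (p_i − m·r_i)²/r_i. -/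
lemma taylor2_lower {f : ℝ → ℝ} {a b : ℝ} (hf : ContDiffOn ℝ 3 f (Set.Ioo a b))
    (hf3 : ∀ x ∈ Set.Ioo a b, 0 ≤ iteratedDeriv 3 f x)
    {c x : ℝ} (hc : c ∈ Set.Ioo a b) (hx : x ∈ Set.Ioo a b) (hcx : c ≤ x) :
    f c + deriv f c * (x - c) + iteratedDeriv 2 f c / 2 * (x - c) ^ 2 ≤ f x := by
  have hO : IsOpen (Set.Ioo a b) := isOpen_Ioo
  have hsub : Set.Icc c x ⊆ Set.Ioo a b := Set.Icc_subset_Ioo hc.1 hx.2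
  have hf1 : ContDiffOn ℝ 2 (deriv f) (Set.Ioo a b) := hf.deriv_of_isOpen hO (by norm_num)
  have hf2 : ContDiffOn ℝ 1 (deriv (deriv f)) (Set.Ioo a b) := hf1.deriv_of_isOpen hO (by norm_num)
  have hd2 : DifferentiableOn ℝ (deriv (deriv f)) (Set.Ioo a b) := hf2.differentiableOn one_ne_zero
  have hd1 : DifferentiableOn ℝ (deriv f) (Set.Ioo a b) := hf1.differentiableOn (by norm_num)
  have hd0 : DifferentiableOn ℝ f (Set.Ioo a b) := hf.differentiableOn (by norm_num)
  have h2eq : iteratedDeriv 2 f = deriv (deriv f) := by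
    rw [show (2:ℕ) = 1 + 1 from rfl, iteratedDeriv_succ, iteratedDeriv_one]
  have h3eq : iteratedDeriv 3 f = deriv (deriv (deriv f)) := by
    rw [show (3:ℕ) = 2 + 1 from rfl, iteratedDeriv_succ, h2eq]
  rw [h2eq]
  have hmono2 : MonotoneOn (deriv (deriv f)) (Set.Icc c x) := by
    apply monotoneOn_of_deriv_nonneg (convex_Icc c x) (hd2.continuousOn.mono hsub)
      (hd2.mono (interior_subset.trans hsub))
    intro y hy
    rw [interior_Icc] at hy
    have := hf3 y (hsub (Set.Ioo_subset_Icc_self hy))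
    rwa [h3eq] at this
  set g1 : ℝ → ℝ := fun y => deriv f y - (deriv f c + deriv (deriv f) c * (y - c)) with hg1def
  have hder_g1 : ∀ y ∈ Set.Ioo a b, HasDerivAt g1 (deriv (deriv f) y - deriv (deriv f) c) y := by
    intro y hy
    have h1 : HasDerivAt (deriv f) (deriv (deriv f) y) y :=
      (hd1.differentiableAt (hO.mem_nhds hy)).hasDerivAt
    have h2 : HasDerivAt (fun y => deriv f c + deriv (deriv f) c * (y - c))
        (deriv (deriv f) c) y := by
      simpa using (((hasDerivAt_id y).sub_const c).const_mul (deriv (deriv f) c)).const_add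
        (deriv f c)
    exact h1.sub h2
  have hmono1 : MonotoneOn g1 (Set.Icc c x) := by
    apply monotoneOn_of_deriv_nonneg (convex_Icc c x)
    · exact fun y hy => ((hder_g1 y (hsub hy)).differentiableAt.continuousAt).continuousWithinAt
    · exact fun y hy =>
        ((hder_g1 y (hsub (interior_subset hy))).differentiableAt).differentiableWithinAt
    · intro y hy
      rw [interior_Icc] at hy
      rw [(hder_g1 y (hsub (Set.Ioo_subset_Icc_self hy))).deriv]
      exact sub_nonneg.mpr (hmono2 ⟨le_rfl, hcx⟩ (Set.Ioo_subset_Icc_self hy) hy.1.le)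
  have hg1c : g1 c = 0 := by simp [hg1def]
  set g : ℝ → ℝ := fun y =>
    f y - (f c + deriv f c * (y - c) + deriv (deriv f) c / 2 * (y - c) ^ 2) with hgdef
  have hder_g : ∀ y ∈ Set.Ioo a b, HasDerivAt g (g1 y) y := by
    intro y hy
    have h1 : HasDerivAt f (deriv f y) y := (hd0.differentiableAt (hO.mem_nhds hy)).hasDerivAt
    have h2 : HasDerivAt (fun y => f c + deriv f c * (y - c) + deriv (deriv f) c / 2 * (y - c) ^ 2)
        (deriv f c + deriv (deriv f) c * (y - c)) y := by
      have hsq : HasDerivAt (fun y : ℝ => (y - c) ^ 2) (2 * (y - c)) y := by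
        simpa using ((hasDerivAt_id y).sub_const c).fun_pow 2
      have := ((((hasDerivAt_id y).sub_const c).const_mul (deriv f c)).const_add (f c)).fun_add
        (hsq.const_mul (deriv (deriv f) c / 2))
      exact this.congr_deriv (by ring)
    exact h1.sub h2
  have hmono : MonotoneOn g (Set.Icc c x) := by
    apply monotoneOn_of_deriv_nonneg (convex_Icc c x)
    · exact fun y hy => ((hder_g y (hsub hy)).differentiableAt.continuousAt).continuousWithinAt
    · exact fun y hy =>
        ((hder_g y (hsub (interior_subset hy))).differentiableAt).differentiableWithinAt
    · intro y hy
      rw [interior_Icc] at hy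
      rw [(hder_g y (hsub (Set.Ioo_subset_Icc_self hy))).deriv]
      rw [← hg1c]
      exact hmono1 ⟨le_rfl, hcx⟩ (Set.Ioo_subset_Icc_self hy) hy.1.le
  have := hmono ⟨le_rfl, hcx⟩ ⟨hcx, le_rfl⟩ hcx
  simp only [hgdef] at this
  simp at this
  linarith

lemma taylor2_upper {f : ℝ → ℝ} {a b : ℝ} (hf : ContDiffOn ℝ 3 f (Set.Ioo a b))
    (hf3 : ∀ x ∈ Set.Ioo a b, 0 ≤ iteratedDeriv 3 f x)
    {c x : ℝ} (hc : c ∈ Set.Ioo a b) (hx : x ∈ Set.Ioo a b) (hxc : x ≤ c) :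
    f x ≤ f c + deriv f c * (x - c) + iteratedDeriv 2 f c / 2 * (x - c) ^ 2 := by
  have hO : IsOpen (Set.Ioo a b) := isOpen_Ioo
  have hsub : Set.Icc x c ⊆ Set.Ioo a b := Set.Icc_subset_Ioo hx.1 hc.2
  have hf1 : ContDiffOn ℝ 2 (deriv f) (Set.Ioo a b) := hf.deriv_of_isOpen hO (by norm_num)
  have hf2 : ContDiffOn ℝ 1 (deriv (deriv f)) (Set.Ioo a b) := hf1.deriv_of_isOpen hO (by norm_num)
  have hd2 : DifferentiableOn ℝ (deriv (deriv f)) (Set.Ioo a b) := hf2.differentiableOn one_ne_zero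
  have hd1 : DifferentiableOn ℝ (deriv f) (Set.Ioo a b) := hf1.differentiableOn (by norm_num)
  have hd0 : DifferentiableOn ℝ f (Set.Ioo a b) := hf.differentiableOn (by norm_num)
  have h2eq : iteratedDeriv 2 f = deriv (deriv f) := by
    rw [show (2:ℕ) = 1 + 1 from rfl, iteratedDeriv_succ, iteratedDeriv_one]
  have h3eq : iteratedDeriv 3 f = deriv (deriv (deriv f)) := by
    rw [show (3:ℕ) = 2 + 1 from rfl, iteratedDeriv_succ, h2eq]
  rw [h2eq]
  have hmono2 : MonotoneOn (deriv (deriv f)) (Set.Icc x c) := by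
    apply monotoneOn_of_deriv_nonneg (convex_Icc x c) (hd2.continuousOn.mono hsub)
      (hd2.mono (interior_subset.trans hsub))
    intro y hy
    rw [interior_Icc] at hy
    have := hf3 y (hsub (Set.Ioo_subset_Icc_self hy))
    rwa [h3eq] at this
  set g1 : ℝ → ℝ := fun y => (deriv f c + deriv (deriv f) c * (y - c)) - deriv f y with hg1def
  have hder_g1 : ∀ y ∈ Set.Ioo a b, HasDerivAt g1 (deriv (deriv f) c - deriv (deriv f) y) y := by
    intro y hy
    have h1 : HasDerivAt (deriv f) (deriv (deriv f) y) y :=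
      (hd1.differentiableAt (hO.mem_nhds hy)).hasDerivAt
    have h2 : HasDerivAt (fun y => deriv f c + deriv (deriv f) c * (y - c))
        (deriv (deriv f) c) y := by
      simpa using (((hasDerivAt_id y).sub_const c).const_mul (deriv (deriv f) c)).const_add
        (deriv f c)
    exact h2.sub h1
  have hmono1 : MonotoneOn g1 (Set.Icc x c) := by
    apply monotoneOn_of_deriv_nonneg (convex_Icc x c)
    · exact fun y hy => ((hder_g1 y (hsub hy)).differentiableAt.continuousAt).continuousWithinAt
    · exact fun y hy =>
        ((hder_g1 y (hsub (interior_subset hy))).differentiableAt).differentiableWithinAt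
    · intro y hy
      rw [interior_Icc] at hy
      rw [(hder_g1 y (hsub (Set.Ioo_subset_Icc_self hy))).deriv]
      exact sub_nonneg.mpr (hmono2 (Set.Ioo_subset_Icc_self hy) ⟨hxc, le_rfl⟩ hy.2.le)
  have hg1c : g1 c = 0 := by simp [hg1def]
  set g : ℝ → ℝ := fun y =>
    (f c + deriv f c * (y - c) + deriv (deriv f) c / 2 * (y - c) ^ 2) - f y with hgdef
  have hder_g : ∀ y ∈ Set.Ioo a b, HasDerivAt g (g1 y) y := by
    intro y hy
    have h1 : HasDerivAt f (deriv f y) y := (hd0.differentiableAt (hO.mem_nhds hy)).hasDerivAt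
    have h2 : HasDerivAt (fun y => f c + deriv f c * (y - c) + deriv (deriv f) c / 2 * (y - c) ^ 2)
        (deriv f c + deriv (deriv f) c * (y - c)) y := by
      have hsq : HasDerivAt (fun y : ℝ => (y - c) ^ 2) (2 * (y - c)) y := by
        simpa using ((hasDerivAt_id y).sub_const c).fun_pow 2
      have := ((((hasDerivAt_id y).sub_const c).const_mul (deriv f c)).const_add (f c)).fun_add
        (hsq.const_mul (deriv (deriv f) c / 2))
      exact this.congr_deriv (by ring)
    exact h2.sub h1
  have hanti : AntitoneOn g (Set.Icc x c) := by
    apply antitoneOn_of_deriv_nonpos (convex_Icc x c)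
    · exact fun y hy => ((hder_g y (hsub hy)).differentiableAt.continuousAt).continuousWithinAt
    · exact fun y hy =>
        ((hder_g y (hsub (interior_subset hy))).differentiableAt).differentiableWithinAt
    · intro y hy
      rw [interior_Icc] at hy
      rw [(hder_g y (hsub (Set.Ioo_subset_Icc_self hy))).deriv]
      rw [← hg1c]
      exact hmono1 (Set.Ioo_subset_Icc_self hy) ⟨hxc, le_rfl⟩ hy.2.le
  have := hanti ⟨le_rfl, hxc⟩ ⟨hxc, le_rfl⟩ hxc
  simp only [hgdef] at this
  simp at this
  linarith

/-- Edmundson–Lah–Ribarič type inequality for the generalized f-divergence of two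
Zipf–Mandelbrot laws (Corollary 4.2 of the paper). -/
theorem elr_zipf_mandelbrot_tm3 (N : ℕ) (hN : 1 ≤ N)
    (q₁ q₂ s₁ s₂ : ℝ) (hq₁ : 0 ≤ q₁) (hq₂ : 0 ≤ q₂) (hs₁ : 0 < s₁) (hs₂ : 0 < s₂)
    (p r : Fin N → ℝ)
    (hp : ∀ i : Fin N, p i =
      1 / ((((i : ℕ) : ℝ) + 1 + q₁) ^ s₁
        * ∑ j : Fin N, 1 / ((((j : ℕ) : ℝ) + 1 + q₁) ^ s₁)))
    (hr : ∀ i : Fin N, r i =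
      1 / ((((i : ℕ) : ℝ) + 1 + q₂) ^ s₂
        * ∑ j : Fin N, 1 / ((((j : ℕ) : ℝ) + 1 + q₂) ^ s₂)))
    (m M : ℝ)
    (hm : IsLeast (Set.range fun i : Fin N => p i / r i) m)
    (hM : IsGreatest (Set.range fun i : Fin N => p i / r i) M)
    (hmM : m < M)
    (f : ℝ → ℝ) (a b : ℝ) (ham : a < m) (hMb : M < b)
    (hf : ContDiffOn ℝ 3 f (Set.Ioo a b))
    (hf3 : ∀ x ∈ Set.Ioo a b, 0 ≤ iteratedDeriv 3 f x) :
    let Δ := (f M - f m) / (M - m)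
    (M - 1) * (deriv f M - Δ)
          - iteratedDeriv 2 f M / 2 * ∑ i, (M * r i - p i) ^ 2 / r i
        ≤ (M - 1) / (M - m) * f m + (1 - m) / (M - m) * f M
            - ∑ i, r i * f (p i / r i)
      ∧ (M - 1) / (M - m) * f m + (1 - m) / (M - m) * f M
            - ∑ i, r i * f (p i / r i)
        ≤ (1 - m) * (Δ - deriv f m)
            - iteratedDeriv 2 f m / 2 * ∑ i, (p i - m * r i) ^ 2 / r i := by
  intro Δ
  have hΔ : Δ = (f M - f m) / (M - m) := rfl
  have hne : Nonempty (Fin N) := Fin.pos_iff_nonempty.mp hN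
  have hH1 : (0:ℝ) < ∑ j : Fin N, 1 / ((((j : ℕ) : ℝ) + 1 + q₁) ^ s₁) :=
    Finset.sum_pos (fun j _ => by positivity) Finset.univ_nonempty
  have hH2 : (0:ℝ) < ∑ j : Fin N, 1 / ((((j : ℕ) : ℝ) + 1 + q₂) ^ s₂) :=
    Finset.sum_pos (fun j _ => by positivity) Finset.univ_nonempty
  have hrpos : ∀ i, 0 < r i := fun i => by
    rw [hr i]; exact one_div_pos.mpr (mul_pos (by positivity) hH2)
  have hrne : ∀ i, r i ≠ 0 := fun i => (hrpos i).ne'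
  have hP : ∑ i, p i = 1 := by
    have h : ∀ i : Fin N, p i =
        (1 / ((((i : ℕ) : ℝ) + 1 + q₁) ^ s₁)) / ∑ j : Fin N, 1 / ((((j : ℕ) : ℝ) + 1 + q₁) ^ s₁) :=
      fun i => by rw [hp i, div_div]
    rw [Finset.sum_congr rfl fun i _ => h i, ← Finset.sum_div, div_self hH1.ne']
  have hR : ∑ i, r i = 1 := by
    have h : ∀ i : Fin N, r i =
        (1 / ((((i : ℕ) : ℝ) + 1 + q₂) ^ s₂)) / ∑ j : Fin N, 1 / ((((j : ℕ) : ℝ) + 1 + q₂) ^ s₂) :=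
      fun i => by rw [hr i, div_div]
    rw [Finset.sum_congr rfl fun i _ => h i, ← Finset.sum_div, div_self hH2.ne']
  have hxm : ∀ i, m ≤ p i / r i := fun i => hm.2 ⟨i, rfl⟩
  have hxM : ∀ i, p i / r i ≤ M := fun i => hM.2 ⟨i, rfl⟩
  have hmIoo : m ∈ Set.Ioo a b := ⟨ham, lt_trans hmM hMb⟩
  have hMIoo : M ∈ Set.Ioo a b := ⟨lt_trans ham hmM, hMb⟩
  have hxIoo : ∀ i, p i / r i ∈ Set.Ioo a b :=
    fun i => ⟨lt_of_lt_of_le ham (hxm i), lt_of_le_of_lt (hxM i) hMb⟩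
  have hMmne : M - m ≠ 0 := sub_ne_zero.mpr hmM.ne'
  have hsum1 : ∑ i, (M * r i - p i) = M - 1 := by
    rw [Finset.sum_sub_distrib, ← Finset.mul_sum, hR, hP, mul_one]
  have hsum2 : ∑ i, (p i - m * r i) = 1 - m := by
    rw [Finset.sum_sub_distrib, ← Finset.mul_sum, hR, hP, mul_one]
  have hmid : (M - 1) / (M - m) * f m + (1 - m) / (M - m) * f M - ∑ i, r i * f (p i / r i)
      = ∑ i, ((M * r i - p i) * (f m / (M - m)) + (p i - m * r i) * (f M / (M - m))
          - r i * f (p i / r i)) := by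
    rw [Finset.sum_sub_distrib, Finset.sum_add_distrib, ← Finset.sum_mul, ← Finset.sum_mul,
      hsum1, hsum2]
    ring
  constructor
  · calc (M - 1) * (deriv f M - Δ)
          - iteratedDeriv 2 f M / 2 * ∑ i, (M * r i - p i) ^ 2 / r i
        = ∑ i, ((M * r i - p i) * (deriv f M - Δ)
            - iteratedDeriv 2 f M / 2 * ((M * r i - p i) ^ 2 / r i)) := by
          rw [Finset.sum_sub_distrib, ← Finset.sum_mul, hsum1, ← Finset.mul_sum]
      _ ≤ ∑ i, ((M * r i - p i) * (f m / (M - m)) + (p i - m * r i) * (f M / (M - m))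
            - r i * f (p i / r i)) := by
          apply Finset.sum_le_sum
          intro i _
          have h1 := taylor2_upper hf hf3 hMIoo (hxIoo i) (hxM i)
          have key : ((M * r i - p i) * (f m / (M - m)) + (p i - m * r i) * (f M / (M - m))
                - r i * f (p i / r i))
              - ((M * r i - p i) * (deriv f M - Δ)
                - iteratedDeriv 2 f M / 2 * ((M * r i - p i) ^ 2 / r i))
              = r i * ((f M + deriv f M * (p i / r i - M)
                  + iteratedDeriv 2 f M / 2 * (p i / r i - M) ^ 2) - f (p i / r i)) := by
            rw [hΔ]
            field_simp [hrne i]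
            ring
          have h2 := mul_nonneg (hrpos i).le (sub_nonneg.mpr h1)
          linarith
      _ = (M - 1) / (M - m) * f m + (1 - m) / (M - m) * f M
            - ∑ i, r i * f (p i / r i) := hmid.symm
  · calc (M - 1) / (M - m) * f m + (1 - m) / (M - m) * f M - ∑ i, r i * f (p i / r i)
        = ∑ i, ((M * r i - p i) * (f m / (M - m)) + (p i - m * r i) * (f M / (M - m))
            - r i * f (p i / r i)) := hmid
      _ ≤ ∑ i, ((p i - m * r i) * (Δ - deriv f m)
            - iteratedDeriv 2 f m / 2 * ((p i - m * r i) ^ 2 / r i)) := by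
          apply Finset.sum_le_sum
          intro i _
          have h1 := taylor2_lower hf hf3 hmIoo (hxIoo i) (hxm i)
          have key : ((p i - m * r i) * (Δ - deriv f m)
                - iteratedDeriv 2 f m / 2 * ((p i - m * r i) ^ 2 / r i))
              - ((M * r i - p i) * (f m / (M - m)) + (p i - m * r i) * (f M / (M - m))
                - r i * f (p i / r i))
              = r i * (f (p i / r i) - (f m + deriv f m * (p i / r i - m)
                  + iteratedDeriv 2 f m / 2 * (p i / r i - m) ^ 2)) := by
            rw [hΔ]
            field_simp [hrne i]
            ring
          have h2 := mul_nonneg (hrpos i).le (sub_nonneg.mpr h1)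
          linarith
      _ = (1 - m) * (Δ - deriv f m)
            - iteratedDeriv 2 f m / 2 * ∑ i, (p i - m * r i) ^ 2 / r i := by
          rw [Finset.sum_sub_distrib, ← Finset.sum_mul, hsum2, ← Finset.mul_sum]
end

section
/- Assume additionally that ψ∘f ∈ L and t ↦ (M − f(t))·(f(t) − m) ∈ L for every continuous ψ : ℝ → ℝ, and for φ three times continuously differentiable on an open interval containing [m,M] define Γ₁(φ) = (M − A(f))/(M − m)·φ(m) + (A(f) − m)/(M − m)·φ(M) − A(φ∘f) − (A((M·1 − f)(f − m·1))/(M − m))·((φ(M) − φ(m))/(M − m) − φ'(m)). Then for any two such functions φ₁, φ₂ with Γ₁(φ₂) ≠ 0 there exists ξ ∈ [m,M] such that Γ₁(φ₁)·φ₂'''(ξ) = Γ₁(φ₂)·φ₁'''(ξ) (i.e. either Γ₁(φ₁)/Γ₁(φ₂) = φ₁'''(ξ)/φ₂'''(ξ) or φ₁'''(ξ) = φ₂'''(ξ) = 0). -/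
set_option maxHeartbeats 1000000

open Set

lemma gamma1_pointwise {m M a b : ℝ} (hmM : m < M) (ham : a < m) (hMb : M < b)
    (φ d1 d2 d3 : ℝ → ℝ)
    (hd1 : ∀ x ∈ Ioo a b, HasDerivAt φ (d1 x) x)
    (hd2 : ∀ x ∈ Ioo a b, HasDerivAt d1 (d2 x) x)
    (hd3 : ∀ x ∈ Ioo a b, HasDerivAt d2 (d3 x) x)
    (hpos : ∀ x ∈ Icc m M, 0 ≤ d3 x) :
    ∀ x ∈ Icc m M, 0 ≤ (M - x)/(M - m) * φ m + (x - m)/(M - m) * φ M - φ x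
        - (M - x)*(x - m)/(M - m) * ((φ M - φ m)/(M - m) - d1 m) := by
  have hMm : (0:ℝ) < M - m := sub_pos.2 hmM
  have hMm' : M - m ≠ 0 := ne_of_gt hMm
  have hsub : Icc m M ⊆ Ioo a b := fun x hx => ⟨lt_of_lt_of_le ham hx.1, lt_of_le_of_lt hx.2 hMb⟩
  set C : ℝ := (φ M - φ m)/(M - m) - d1 m with hC
  set H : ℝ → ℝ := fun x => (M - x)/(M - m) * φ m + (x - m)/(M - m) * φ M - φ x
      - (M - x)*(x - m)/(M - m) * C with hH
  set H1 : ℝ → ℝ := fun x => (φ M - φ m)/(M - m) - d1 x - (M + m - 2*x)/(M - m) * C with hH1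
  set H2 : ℝ → ℝ := fun x => 2*C/(M - m) - d2 x with hH2
  -- derivative chains
  have hHd : ∀ x ∈ Ioo a b, HasDerivAt H (H1 x) x := by
    intro x hx
    have hA : HasDerivAt (fun y : ℝ => M - y) (-1) x := by
      simpa using (hasDerivAt_id x).const_sub M
    have hB : HasDerivAt (fun y : ℝ => y - m) 1 x := (hasDerivAt_id x).sub_const m
    have hP := ((((hA.div_const (M - m)).mul_const (φ m)).add
        ((hB.div_const (M - m)).mul_const (φ M))).sub (hd1 x hx)).sub
        (((hA.mul hB).div_const (M - m)).mul_const C)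
    have hval : (-1)/(M - m) * φ m + 1/(M - m) * φ M - d1 x
        - ((-1) * (x - m) + (M - x) * 1)/(M - m) * C = H1 x := by
      rw [hH1]; field_simp; ring
    rw [hH]
    exact hval ▸ hP
  have hH1d : ∀ x ∈ Ioo a b, HasDerivAt H1 (H2 x) x := by
    intro x hx
    have hQ : HasDerivAt (fun y : ℝ => M + m - 2*y) (-2) x := by
      simpa using ((hasDerivAt_id x).const_mul 2).const_sub (M + m)
    have hP := (((hd2 x hx).const_sub ((φ M - φ m)/(M - m))).sub
        ((hQ.div_const (M - m)).mul_const C))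
    have hval : -(d2 x) - (-2)/(M - m) * C = H2 x := by
      rw [hH2]; field_simp; ring
    rw [hH1]
    exact hval ▸ hP
  have hH2d : ∀ x ∈ Ioo a b, HasDerivAt H2 (-(d3 x)) x := by
    intro x hx
    rw [hH2]
    exact (hd3 x hx).const_sub (2*C/(M - m))
  -- boundary values
  have hHm0 : H m = 0 := by rw [hH]; field_simp; ring
  have hHM0 : H M = 0 := by rw [hH]; field_simp; ring
  have hH1m0 : H1 m = 0 := by rw [hH1, hC]; field_simp; ring
  -- continuity
  have hHc : ContinuousOn H (Icc m M) := fun x hx =>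
    (hHd x (hsub hx)).continuousAt.continuousWithinAt
  have hH1c : ContinuousOn H1 (Icc m M) := fun x hx =>
    (hH1d x (hsub hx)).continuousAt.continuousWithinAt
  have hH2c : ContinuousOn H2 (Icc m M) := fun x hx =>
    (hH2d x (hsub hx)).continuousAt.continuousWithinAt
  -- Rolle twice
  obtain ⟨c₁, hc₁, hc₁0⟩ := exists_hasDerivAt_eq_zero (f' := H1) hmM hHc
    (hHm0.trans hHM0.symm) (fun x hx => hHd x (hsub (Ioo_subset_Icc_self hx)))
  obtain ⟨c₂, hc₂, hc₂0⟩ := exists_hasDerivAt_eq_zero (f' := H2) hc₁.1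
    (hH1c.mono (Icc_subset_Icc_right hc₁.2.le))
    (hH1m0.trans hc₁0.symm)
    (fun x hx => hH1d x (hsub ⟨hx.1.le, hx.2.le.trans hc₁.2.le⟩))
  have hc₂M : c₂ ∈ Icc m M := ⟨hc₂.1.le, hc₂.2.le.trans hc₁.2.le⟩
  -- H2 is antitone on [m, M]
  have hH2anti : AntitoneOn H2 (Icc m M) := by
    apply antitoneOn_of_deriv_nonpos (convex_Icc m M) hH2c
    · rw [interior_Icc]
      intro x hx
      exact (hH2d x (hsub (Ioo_subset_Icc_self hx))).differentiableAt.differentiableWithinAt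
    · rw [interior_Icc]
      intro x hx
      rw [(hH2d x (hsub (Ioo_subset_Icc_self hx))).deriv]
      exact neg_nonpos.2 (hpos x (Ioo_subset_Icc_self hx))
  have hH2nn : ∀ x ∈ Icc m c₂, 0 ≤ H2 x := fun x hx => by
    have := hH2anti ⟨hx.1, hx.2.trans hc₂M.2⟩ hc₂M hx.2
    rw [hc₂0] at this; exact this
  have hH2np : ∀ x ∈ Icc c₂ M, H2 x ≤ 0 := fun x hx => by
    have := hH2anti hc₂M ⟨hc₂M.1.trans hx.1, hx.2⟩ hx.1
    rw [hc₂0] at this; exact this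
  -- H1 is monotone on [m, c₂] and antitone on [c₂, M]
  have hsub1 : Icc m c₂ ⊆ Icc m M := Icc_subset_Icc_right hc₂M.2
  have hsub2 : Icc c₂ M ⊆ Icc m M := Icc_subset_Icc_left hc₂M.1
  have hH1mono : MonotoneOn H1 (Icc m c₂) := by
    apply monotoneOn_of_deriv_nonneg (convex_Icc m c₂) (hH1c.mono hsub1)
    · rw [interior_Icc]
      intro x hx
      exact (hH1d x (hsub (hsub1 (Ioo_subset_Icc_self hx)))).differentiableAt.differentiableWithinAt
    · rw [interior_Icc]
      intro x hx
      rw [(hH1d x (hsub (hsub1 (Ioo_subset_Icc_self hx)))).deriv]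
      exact hH2nn x (Ioo_subset_Icc_self hx)
  have hH1anti : AntitoneOn H1 (Icc c₂ M) := by
    apply antitoneOn_of_deriv_nonpos (convex_Icc c₂ M) (hH1c.mono hsub2)
    · rw [interior_Icc]
      intro x hx
      exact (hH1d x (hsub (hsub2 (Ioo_subset_Icc_self hx)))).differentiableAt.differentiableWithinAt
    · rw [interior_Icc]
      intro x hx
      rw [(hH1d x (hsub (hsub2 (Ioo_subset_Icc_self hx)))).deriv]
      exact hH2np x (Ioo_subset_Icc_self hx)
  have hH1nn : ∀ y ∈ Icc m c₂, 0 ≤ H1 y := fun y hy => by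
    have := hH1mono ⟨le_refl m, hc₂.1.le⟩ hy hy.1
    rw [hH1m0] at this; exact this
  -- main case split
  intro x hx
  have hgoal : 0 ≤ H x := by
    by_cases hcase : ∀ y ∈ Icc m x, 0 ≤ H1 y
    · have hmono : MonotoneOn H (Icc m x) := by
        apply monotoneOn_of_deriv_nonneg (convex_Icc m x)
          (hHc.mono (Icc_subset_Icc_right hx.2))
        · rw [interior_Icc]
          intro y hy
          exact (hHd y (hsub ⟨hy.1.le, hy.2.le.trans hx.2⟩)).differentiableAt.differentiableWithinAt
        · rw [interior_Icc]
          intro y hy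
          rw [(hHd y (hsub ⟨hy.1.le, hy.2.le.trans hx.2⟩)).deriv]
          exact hcase y (Ioo_subset_Icc_self hy)
      have := hmono (left_mem_Icc.2 hx.1) (right_mem_Icc.2 hx.1) hx.1
      rw [hHm0] at this; exact this
    · push_neg at hcase
      obtain ⟨y, hy, hyneg⟩ := hcase
      have hyM : y ∈ Icc m M := ⟨hy.1, hy.2.trans hx.2⟩
      have hyc₂ : c₂ < y := by
        by_contra h
        push_neg at h
        exact absurd (hH1nn y ⟨hy.1, h⟩) (not_le.2 hyneg)
      have hanti : AntitoneOn H (Icc x M) := by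
        apply antitoneOn_of_deriv_nonpos (convex_Icc x M)
          (hHc.mono (Icc_subset_Icc_left hx.1))
        · rw [interior_Icc]
          intro z hz
          exact (hHd z (hsub ⟨hx.1.trans hz.1.le, hz.2.le⟩)).differentiableAt.differentiableWithinAt
        · rw [interior_Icc]
          intro z hz
          rw [(hHd z (hsub ⟨hx.1.trans hz.1.le, hz.2.le⟩)).deriv]
          have hzc : z ∈ Icc c₂ M := ⟨(hyc₂.le.trans hy.2).trans hz.1.le, hz.2.le⟩
          have hyc : y ∈ Icc c₂ M := ⟨hyc₂.le, hyM.2⟩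
          have := hH1anti hyc hzc (hy.2.trans hz.1.le)
          linarith
      have := hanti (left_mem_Icc.2 hx.2) (right_mem_Icc.2 hx.2) hx.2
      rw [hHM0] at this; exact this
  rw [hH] at hgoal
  simpa using hgoal
lemma gamma1_A_nonneg {E : Type*} (L : Submodule ℝ (E → ℝ))
    (h1L : (fun _ : E => (1 : ℝ)) ∈ L)
    (A : L →ₗ[ℝ] ℝ)
    (hApos : ∀ g : L, (∀ t : E, 0 ≤ g.1 t) → 0 ≤ A g)
    (hAnorm : A ⟨fun _ => 1, h1L⟩ = 1)
    (m M : ℝ) (hmM : m < M)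
    (f : E → ℝ) (hfL : f ∈ L)
    (hKL : (fun t => (M - f t) * (f t - m)) ∈ L)
    (g : E → ℝ) (hgL : g ∈ L) (pm pM c : ℝ)
    (hpos : ∀ t : E, 0 ≤ (M - f t)/(M - m) * pm + (f t - m)/(M - m) * pM - g t
        - (M - f t)*(f t - m)/(M - m) * c) :
    0 ≤ (M - A ⟨f, hfL⟩)/(M - m) * pm + (A ⟨f, hfL⟩ - m)/(M - m) * pM - A ⟨g, hgL⟩
        - A ⟨fun t => (M - f t) * (f t - m), hKL⟩/(M - m) * c := by
  have hMm' : M - m ≠ 0 := ne_of_gt (sub_pos.2 hmM)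
  set one : L := ⟨fun _ => 1, h1L⟩ with hone
  set F : L := ⟨f, hfL⟩ with hF
  set Kl : L := ⟨fun t => (M - f t) * (f t - m), hKL⟩ with hKl
  set G : L := ⟨g, hgL⟩ with hG
  set u : L := (pm/(M - m)) • (M • one - F) + (pM/(M - m)) • (F - m • one) - G
      - (c/(M - m)) • Kl with hu
  have huval : ∀ t : E, u.1 t = (M - f t)/(M - m) * pm + (f t - m)/(M - m) * pM - g t
      - (M - f t)*(f t - m)/(M - m) * c := by
    intro t
    have : u.1 t = pm/(M - m) * (M * 1 - f t) + pM/(M - m) * (f t - m * 1) - g t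
        - c/(M - m) * ((M - f t) * (f t - m)) := by
      rw [hu]; rfl
    rw [this]; ring
  have hAu : 0 ≤ A u := hApos u (fun t => (huval t) ▸ hpos t)
  have : A u = (M - A F)/(M - m) * pm + (A F - m)/(M - m) * pM - A G
      - A Kl/(M - m) * c := by
    rw [hu]
    simp only [map_add, map_sub, map_smul, smul_eq_mul, hAnorm.symm ▸ (rfl : A one = A one)]
    rw [show A one = 1 from hAnorm]
    field_simp
  linarith [hAu, this.symm.le]

/-- Mean value theorem of Cauchy type for the functional Γ₁
(Theorem 6.2 of the paper). -/
theorem gamma1_cauchy_mean_value {E : Type*} [Nonempty E] (L : Submodule ℝ (E → ℝ))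
    (h1L : (fun _ : E => (1 : ℝ)) ∈ L)
    (A : L →ₗ[ℝ] ℝ)
    (hApos : ∀ g : L, (∀ t : E, 0 ≤ g.1 t) → 0 ≤ A g)
    (hAnorm : A ⟨fun _ => 1, h1L⟩ = 1)
    (m M : ℝ) (hmM : m < M)
    (f : E → ℝ) (hfL : f ∈ L) (hfm : ∀ t, m ≤ f t) (hfM : ∀ t, f t ≤ M)
    (hcomp : ∀ ψ : ℝ → ℝ, Continuous ψ → (fun t => ψ (f t)) ∈ L)
    (hKL : (fun t => (M - f t) * (f t - m)) ∈ L)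
    (φ₁ φ₂ : ℝ → ℝ) (a b : ℝ) (ham : a < m) (hMb : M < b)
    (hφ₁ : ContDiffOn ℝ 3 φ₁ (Set.Ioo a b))
    (hφ₂ : ContDiffOn ℝ 3 φ₂ (Set.Ioo a b))
    (hφ₁fL : (fun t => φ₁ (f t)) ∈ L)
    (hφ₂fL : (fun t => φ₂ (f t)) ∈ L)
    (hΓ₂ : (M - A ⟨f, hfL⟩) / (M - m) * φ₂ m + (A ⟨f, hfL⟩ - m) / (M - m) * φ₂ M
          - A ⟨fun t => φ₂ (f t), hφ₂fL⟩
          - A ⟨fun t => (M - f t) * (f t - m), hKL⟩ / (M - m)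
              * ((φ₂ M - φ₂ m) / (M - m) - deriv φ₂ m) ≠ 0) :
    ∃ ξ ∈ Set.Icc m M,
      ((M - A ⟨f, hfL⟩) / (M - m) * φ₁ m + (A ⟨f, hfL⟩ - m) / (M - m) * φ₁ M
          - A ⟨fun t => φ₁ (f t), hφ₁fL⟩
          - A ⟨fun t => (M - f t) * (f t - m), hKL⟩ / (M - m)
              * ((φ₁ M - φ₁ m) / (M - m) - deriv φ₁ m)) * iteratedDeriv 3 φ₂ ξ
        = ((M - A ⟨f, hfL⟩) / (M - m) * φ₂ m + (A ⟨f, hfL⟩ - m) / (M - m) * φ₂ M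
          - A ⟨fun t => φ₂ (f t), hφ₂fL⟩
          - A ⟨fun t => (M - f t) * (f t - m), hKL⟩ / (M - m)
              * ((φ₂ M - φ₂ m) / (M - m) - deriv φ₂ m)) * iteratedDeriv 3 φ₁ ξ := by
  have hMm : (0:ℝ) < M - m := sub_pos.2 hmM
  have hsubIcc : Icc m M ⊆ Ioo a b := fun x hx =>
    ⟨lt_of_lt_of_le ham hx.1, lt_of_le_of_lt hx.2 hMb⟩
  -- the key positivity principle for the functional Γ₁
  have key : ∀ (φ d1 d2 d3 : ℝ → ℝ) (hg : (fun t => φ (f t)) ∈ L),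
      (∀ x ∈ Set.Ioo a b, HasDerivAt φ (d1 x) x) →
      (∀ x ∈ Set.Ioo a b, HasDerivAt d1 (d2 x) x) →
      (∀ x ∈ Set.Ioo a b, HasDerivAt d2 (d3 x) x) →
      (∀ x ∈ Set.Icc m M, 0 ≤ d3 x) →
      0 ≤ (M - A ⟨f, hfL⟩)/(M - m) * φ m + (A ⟨f, hfL⟩ - m)/(M - m) * φ M
          - A ⟨fun t => φ (f t), hg⟩
          - A ⟨fun t => (M - f t) * (f t - m), hKL⟩/(M - m)
              * ((φ M - φ m)/(M - m) - d1 m) := by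
    intro φ d1 d2 d3 hg h1 h2 h3 h4
    exact gamma1_A_nonneg L h1L A hApos hAnorm m M hmM f hfL hKL _ hg (φ m) (φ M) _
      (fun t => gamma1_pointwise hmM ham hMb φ d1 d2 d3 h1 h2 h3 h4 (f t) ⟨hfm t, hfM t⟩)
  -- derivative chains for C³ functions
  have chain : ∀ φ : ℝ → ℝ, ContDiffOn ℝ 3 φ (Set.Ioo a b) →
      (∀ x ∈ Set.Ioo a b, HasDerivAt φ (deriv φ x) x) ∧
      (∀ x ∈ Set.Ioo a b, HasDerivAt (deriv φ) (deriv (deriv φ) x) x) ∧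
      (∀ x ∈ Set.Ioo a b, HasDerivAt (deriv (deriv φ)) (deriv (deriv (deriv φ)) x) x) ∧
      ContinuousOn (deriv (deriv (deriv φ))) (Set.Ioo a b) := by
    intro φ hφ
    have h2 : ContDiffOn ℝ 2 (deriv φ) (Set.Ioo a b) :=
      hφ.deriv_of_isOpen isOpen_Ioo (by norm_num)
    have h1 : ContDiffOn ℝ 1 (deriv (deriv φ)) (Set.Ioo a b) :=
      h2.deriv_of_isOpen isOpen_Ioo (by norm_num)
    have h0 : ContDiffOn ℝ 0 (deriv (deriv (deriv φ))) (Set.Ioo a b) :=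
      h1.deriv_of_isOpen isOpen_Ioo (by norm_num)
    exact ⟨fun x hx => ((hφ.differentiableOn (by norm_num)).differentiableAt
          (isOpen_Ioo.mem_nhds hx)).hasDerivAt,
      fun x hx => ((h2.differentiableOn (by norm_num)).differentiableAt
          (isOpen_Ioo.mem_nhds hx)).hasDerivAt,
      fun x hx => ((h1.differentiableOn (by norm_num)).differentiableAt
          (isOpen_Ioo.mem_nhds hx)).hasDerivAt,
      h0.continuousOn⟩
  obtain ⟨hc1₁, hc2₁, hc3₁, hcont₁⟩ := chain φ₁ hφ₁
  obtain ⟨hc1₂, hc2₂, hc3₂, hcont₂⟩ := chain φ₂ hφ₂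
  have hiter : ∀ φ : ℝ → ℝ, iteratedDeriv 3 φ = deriv (deriv (deriv φ)) := by
    intro φ
    rw [show (3:ℕ) = 2 + 1 from rfl, iteratedDeriv_succ,
      show (2:ℕ) = 1 + 1 from rfl, iteratedDeriv_succ, iteratedDeriv_one]
  -- cube function chain
  have hconv : ∀ {g : ℝ → ℝ} {v w x : ℝ}, HasDerivAt g v x → v = w → HasDerivAt g w x :=
    fun h he => he ▸ h
  have hp1 : ∀ x : ℝ, HasDerivAt (fun y : ℝ => y^3) (3*x^2) x :=
    fun x => hconv (hasDerivAt_pow 3 x) (by push_cast; ring)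
  have hp2 : ∀ x : ℝ, HasDerivAt (fun y : ℝ => 3*y^2) (6*x) x :=
    fun x => hconv ((hasDerivAt_pow 2 x).const_mul (3:ℝ)) (by push_cast; ring)
  have hp3 : ∀ x : ℝ, HasDerivAt (fun y : ℝ => 6*y) (6:ℝ) x :=
    fun x => hconv ((hasDerivAt_id x).const_mul (6:ℝ)) (by ring)
  have hpL : (fun t : E => (f t)^3) ∈ L := hcomp (fun x => x^3) (continuous_pow 3)
  -- abbreviate the three Γ₁ values
  set G1 : ℝ := (M - A ⟨f, hfL⟩) / (M - m) * φ₁ m + (A ⟨f, hfL⟩ - m) / (M - m) * φ₁ M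
          - A ⟨fun t => φ₁ (f t), hφ₁fL⟩
          - A ⟨fun t => (M - f t) * (f t - m), hKL⟩ / (M - m)
              * ((φ₁ M - φ₁ m) / (M - m) - deriv φ₁ m) with hG1def
  set G2 : ℝ := (M - A ⟨f, hfL⟩) / (M - m) * φ₂ m + (A ⟨f, hfL⟩ - m) / (M - m) * φ₂ M
          - A ⟨fun t => φ₂ (f t), hφ₂fL⟩
          - A ⟨fun t => (M - f t) * (f t - m), hKL⟩ / (M - m)
              * ((φ₂ M - φ₂ m) / (M - m) - deriv φ₂ m) with hG2def
  set Γp : ℝ := (M - A ⟨f, hfL⟩)/(M - m) * m^3 + (A ⟨f, hfL⟩ - m)/(M - m) * M^3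
      - A ⟨fun t => (f t)^3, hpL⟩
      - A ⟨fun t => (M - f t) * (f t - m), hKL⟩/(M - m)
          * ((M^3 - m^3)/(M - m) - 3*m^2) with hΓpdef
  clear_value G1 G2 Γp
  have hΓp : 0 ≤ Γp := by
    rw [hΓpdef]
    exact key (fun y => y^3) (fun y => 3*y^2) (fun y => 6*y) (fun _ => 6) hpL
      (fun x _ => hp1 x) (fun x _ => hp2 x) (fun x _ => hp3 x) (fun x _ => by norm_num)
  -- the general linear-combination bound
  have hbound : ∀ c₁ c₂ r : ℝ,
      (∀ x ∈ Set.Icc m M,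
        r ≤ c₁ * deriv (deriv (deriv φ₁)) x - c₂ * deriv (deriv (deriv φ₂)) x) →
      0 ≤ (c₁*G1 - c₂*G2) - r/6*Γp := by
    intro c₁ c₂ r hr
    have hmem : (fun t => c₁*φ₁ (f t) - c₂*φ₂ (f t) - r/6*(f t)^3) ∈ L :=
      L.sub_mem (L.sub_mem (L.smul_mem c₁ hφ₁fL) (L.smul_mem c₂ hφ₂fL))
        (L.smul_mem (r/6) hpL)
    have h1 : 0 ≤ (M - A ⟨f, hfL⟩)/(M - m) * (c₁*φ₁ m - c₂*φ₂ m - r/6*m^3)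
        + (A ⟨f, hfL⟩ - m)/(M - m) * (c₁*φ₁ M - c₂*φ₂ M - r/6*M^3)
        - A ⟨fun t => c₁*φ₁ (f t) - c₂*φ₂ (f t) - r/6*(f t)^3, hmem⟩
        - A ⟨fun t => (M - f t) * (f t - m), hKL⟩/(M - m)
            * (((c₁*φ₁ M - c₂*φ₂ M - r/6*M^3) - (c₁*φ₁ m - c₂*φ₂ m - r/6*m^3))/(M - m)
                - (c₁*deriv φ₁ m - c₂*deriv φ₂ m - r/6*(3*m^2))) := by
      refine key (fun y => c₁*φ₁ y - c₂*φ₂ y - r/6*y^3)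
        (fun y => c₁*deriv φ₁ y - c₂*deriv φ₂ y - r/6*(3*y^2))
        (fun y => c₁*deriv (deriv φ₁) y - c₂*deriv (deriv φ₂) y - r/6*(6*y))
        (fun y => c₁*deriv (deriv (deriv φ₁)) y - c₂*deriv (deriv (deriv φ₂)) y - r/6*6)
        hmem
        (fun x hx => (((hc1₁ x hx).const_mul c₁).sub ((hc1₂ x hx).const_mul c₂)).sub
          ((hp1 x).const_mul (r/6)))
        (fun x hx => (((hc2₁ x hx).const_mul c₁).sub ((hc2₂ x hx).const_mul c₂)).sub
          ((hp2 x).const_mul (r/6)))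
        (fun x hx => (((hc3₁ x hx).const_mul c₁).sub ((hc3₂ x hx).const_mul c₂)).sub
          ((hp3 x).const_mul (r/6)))
        ?_
      intro x hx
      have := hr x hx
      linarith
    have hAψ : A ⟨fun t => c₁*φ₁ (f t) - c₂*φ₂ (f t) - r/6*(f t)^3, hmem⟩
        = c₁ * A ⟨fun t => φ₁ (f t), hφ₁fL⟩ - c₂ * A ⟨fun t => φ₂ (f t), hφ₂fL⟩
          - r/6 * A ⟨fun t => (f t)^3, hpL⟩ := by
      have he : (⟨fun t => c₁*φ₁ (f t) - c₂*φ₂ (f t) - r/6*(f t)^3, hmem⟩ : L)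
          = c₁ • (⟨fun t => φ₁ (f t), hφ₁fL⟩ : L) - c₂ • (⟨fun t => φ₂ (f t), hφ₂fL⟩ : L)
            - (r/6) • (⟨fun t => (f t)^3, hpL⟩ : L) := by
        apply Subtype.ext
        rfl
      rw [he, map_sub, map_sub, map_smul, map_smul, map_smul, smul_eq_mul, smul_eq_mul,
        smul_eq_mul]
    rw [hAψ] at h1
    have hring : (M - A ⟨f, hfL⟩)/(M - m) * (c₁*φ₁ m - c₂*φ₂ m - r/6*m^3)
        + (A ⟨f, hfL⟩ - m)/(M - m) * (c₁*φ₁ M - c₂*φ₂ M - r/6*M^3)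
        - (c₁ * A ⟨fun t => φ₁ (f t), hφ₁fL⟩ - c₂ * A ⟨fun t => φ₂ (f t), hφ₂fL⟩
          - r/6 * A ⟨fun t => (f t)^3, hpL⟩)
        - A ⟨fun t => (M - f t) * (f t - m), hKL⟩/(M - m)
            * (((c₁*φ₁ M - c₂*φ₂ M - r/6*M^3) - (c₁*φ₁ m - c₂*φ₂ m - r/6*m^3))/(M - m)
                - (c₁*deriv φ₁ m - c₂*deriv φ₂ m - r/6*(3*m^2)))
        = (c₁*G1 - c₂*G2) - r/6*Γp := by
      rw [hG1def, hG2def, hΓpdef]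
      ring
    rw [hring] at h1
    exact h1
  rcases (eq_or_lt_of_le hΓp).imp Eq.symm id with hΓp0 | hΓppos
  · -- Γp = 0 : then Γ₁(φ₂) = 0, contradiction
    exfalso
    obtain ⟨k, hk⟩ := isCompact_Icc.exists_bound_of_continuousOn (hcont₂.mono hsubIcc)
    have hs1 : 0 ≤ ((0:ℝ)*G1 - (-1)*G2) - (-k)/6*Γp := by
      apply hbound 0 (-1) (-k)
      intro x hx
      have h := hk x hx
      rw [Real.norm_eq_abs] at h
      have := abs_le.mp h
      linarith [this.1, this.2]
    have hs2 : 0 ≤ ((0:ℝ)*G1 - 1*G2) - (-k)/6*Γp := by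
      apply hbound 0 1 (-k)
      intro x hx
      have h := hk x hx
      rw [Real.norm_eq_abs] at h
      have := abs_le.mp h
      linarith [this.1, this.2]
    rw [hΓp0] at hs1 hs2
    exact hΓ₂ (by linarith)
  · -- Γp > 0 : intermediate value argument
    have hGcont : ContinuousOn
        (fun x => G2 * deriv (deriv (deriv φ₁)) x - G1 * deriv (deriv (deriv φ₂)) x)
        (Set.Icc m M) :=
      (continuousOn_const.mul (hcont₁.mono hsubIcc)).sub
        (continuousOn_const.mul (hcont₂.mono hsubIcc))
    obtain ⟨ξ₁, hξ₁mem, hξ₁min⟩ :=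
      isCompact_Icc.exists_isMinOn (nonempty_Icc.mpr hmM.le) hGcont
    obtain ⟨ξ₂, hξ₂mem, hξ₂max⟩ :=
      isCompact_Icc.exists_isMaxOn (nonempty_Icc.mpr hmM.le) hGcont
    have hsle : G2 * deriv (deriv (deriv φ₁)) ξ₁ - G1 * deriv (deriv (deriv φ₂)) ξ₁ ≤ 0 := by
      have h := hbound G2 G1
          (G2 * deriv (deriv (deriv φ₁)) ξ₁ - G1 * deriv (deriv (deriv φ₂)) ξ₁)
          (fun x hx => isMinOn_iff.mp hξ₁min x hx)
      by_contra h'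
      push_neg at h'
      nlinarith [mul_pos h' hΓppos, h]
    have hSge : 0 ≤ G2 * deriv (deriv (deriv φ₁)) ξ₂ - G1 * deriv (deriv (deriv φ₂)) ξ₂ := by
      have h := hbound (-G2) (-G1)
          (-(G2 * deriv (deriv (deriv φ₁)) ξ₂ - G1 * deriv (deriv (deriv φ₂)) ξ₂))
          (fun x hx => by have := isMaxOn_iff.mp hξ₂max x hx; linarith)
      by_contra h'
      push_neg at h'
      have h'' : 0 < -(G2 * deriv (deriv (deriv φ₁)) ξ₂ - G1 * deriv (deriv (deriv φ₂)) ξ₂) := by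
        linarith
      nlinarith [mul_pos h'' hΓppos, h]
    have huIcc : Set.uIcc ξ₁ ξ₂ ⊆ Set.Icc m M :=
      (ordConnected_Icc).uIcc_subset hξ₁mem hξ₂mem
    have h0mem : (0:ℝ) ∈ Set.uIcc
        (G2 * deriv (deriv (deriv φ₁)) ξ₁ - G1 * deriv (deriv (deriv φ₂)) ξ₁)
        (G2 * deriv (deriv (deriv φ₁)) ξ₂ - G1 * deriv (deriv (deriv φ₂)) ξ₂) :=
      Set.mem_uIcc.2 (Or.inl ⟨hsle, hSge⟩)
    obtain ⟨ξ, hξ, hGξ⟩ := intermediate_value_uIcc (hGcont.mono huIcc) h0mem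
    refine ⟨ξ, huIcc hξ, ?_⟩
    rw [hiter φ₁, hiter φ₂]
    simp only at hGξ
    linarith [hGξ]
end
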